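/- arXiv:2008.10793 — 5 statements merged into one kernel-verified Lean document; each statement's English description precedes it below -/
import Mathlib

section
/- Let R be a commutative ring, n ≥ 3, and 1 ≤ i ≤ n−2. For all a, b, c ∈ R one has the braid identity R_i(a)·R_{i+1}(b)·R_i(c) = R_{i+1}(c)·R_i(ac − b)·R_{i+1}(a) in Mat_n(R). -/
/-- `Rmat n i q` is the identity matrix except that its 2×2 submatrix in rows and
columns `i`, `i+1` (1-based) is `[[q, -1], [1, 0]]`. -/
def Rmat {R : Type*} [CommRing R] (n i : ℕ) (q : R) : Matrix (Fin n) (Fin n) R :=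
  Matrix.of fun a c =>
    if (a : ℕ) + 1 = i ∧ (c : ℕ) + 1 = i then q
    else if (a : ℕ) + 1 = i ∧ (c : ℕ) = i then -1
    else if (a : ℕ) = i ∧ (c : ℕ) + 1 = i then 1
    else if (a : ℕ) = i ∧ (c : ℕ) = i then 0
    else if a = c then 1 else 0

open Matrix in
lemma Rmat_eq {R : Type*} [CommRing R] {n i : ℕ} (j k : Fin n)
    (hj : (j : ℕ) + 1 = i) (hk : (k : ℕ) = i) (q : R) :
    Rmat n i q = 1 + (q - 1) • single j j 1
      - single j k 1 + single k j 1 - single k k 1 := by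
  ext x y
  simp only [Rmat, Matrix.of_apply, Matrix.add_apply, Matrix.sub_apply, Matrix.smul_apply,
    Matrix.one_apply, Matrix.single, Fin.ext_iff, smul_eq_mul]
  split_ifs <;> first | (exfalso; omega) | ring1

theorem Rmat_braid {R : Type*} [CommRing R] {n : ℕ} (hn : 3 ≤ n)
    (i : ℕ) (hi1 : 1 ≤ i) (hi2 : i ≤ n - 2) (a b c : R) :
    Rmat n i a * Rmat n (i + 1) b * Rmat n i c
      = Rmat n (i + 1) c * Rmat n i (a * c - b) * Rmat n (i + 1) a := by
  have h0 : i - 1 < n := by omega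
  have h1 : i < n := by omega
  have h2 : i + 1 < n := by omega
  set j : Fin n := ⟨i - 1, h0⟩ with hjd
  set k : Fin n := ⟨i, h1⟩ with hkd
  set l : Fin n := ⟨i + 1, h2⟩ with hld
  have hj : (j : ℕ) + 1 = i := by simp [hjd]; omega
  have hk : (k : ℕ) = i := rfl
  have hk' : (k : ℕ) + 1 = i + 1 := rfl
  have hl : (l : ℕ) = i + 1 := rfl
  have hjk : j ≠ k := Fin.ne_of_val_ne (by simp [hjd, hkd]; try omega)
  have hkj : k ≠ j := hjk.symm
  have hjl : j ≠ l := Fin.ne_of_val_ne (by simp [hjd, hld]; try omega)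
  have hlj : l ≠ j := hjl.symm
  have hkl : k ≠ l := Fin.ne_of_val_ne (by simp [hkd, hld])
  have hlk : l ≠ k := hkl.symm
  rw [Rmat_eq j k hj hk a, Rmat_eq j k hj hk c, Rmat_eq j k hj hk (a * c - b),
      Rmat_eq k l hk' hl b, Rmat_eq k l hk' hl c, Rmat_eq k l hk' hl a]
  simp only [mul_add, add_mul, mul_sub, sub_mul, smul_mul_assoc, Matrix.mul_smul,
    one_mul, mul_one, Matrix.single_mul_single_same, Matrix.single_mul_single_of_ne,
    hjk, hkj, hjl, hlj, hkl, hlk, ne_eq, not_false_iff, smul_zero, zero_mul, mul_zero,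
    sub_zero, zero_sub, add_zero, zero_add, smul_smul]
  match_scalars <;> ring
end

section
/- Let R be a commutative ring of characteristic 2, n ≥ 2, 1 ≤ i ≤ n−1, b ∈ R, and let L ∈ Mat_n(R) be strictly lower triangular. Set b' = b + L_{i+1,i}. Then Z_i(b)·(I + L)·Z_i(b')⁻¹ is lower unitriangular, i.e., all of its entries strictly above the diagonal vanish and all of its diagonal entries equal 1. -/
/-- `Zmat n i b` is the identity matrix except that its 2×2 submatrix in rows and
columns `i`, `i+1` (1-based) is `[[b, 1], [1, 0]]`. -/
def Zmat {R : Type*} [CommRing R] (n i : ℕ) (b : R) : Matrix (Fin n) (Fin n) R :=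
  Matrix.of fun a c =>
    if (a : ℕ) + 1 = i ∧ (c : ℕ) + 1 = i then b
    else if (a : ℕ) + 1 = i ∧ (c : ℕ) = i then 1
    else if (a : ℕ) = i ∧ (c : ℕ) + 1 = i then 1
    else if (a : ℕ) = i ∧ (c : ℕ) = i then 0
    else if a = c then 1 else 0

/-- The inverse of `Zmat` in characteristic 2. -/
def Zinvmat {R : Type*} [CommRing R] (n i : ℕ) (b : R) : Matrix (Fin n) (Fin n) R :=
  Matrix.of fun a c =>
    if (a : ℕ) + 1 = i ∧ (c : ℕ) + 1 = i then 0
    else if (a : ℕ) + 1 = i ∧ (c : ℕ) = i then 1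
    else if (a : ℕ) = i ∧ (c : ℕ) + 1 = i then 1
    else if (a : ℕ) = i ∧ (c : ℕ) = i then b
    else if a = c then 1 else 0

section

variable {R : Type*} [CommRing R] {n i : ℕ} {p q : Fin n}

lemma Zmat_entry (b : R) (a c : Fin n) :
    Zmat n i b a c =
      if (a : ℕ) + 1 = i ∧ (c : ℕ) + 1 = i then b
      else if (a : ℕ) + 1 = i ∧ (c : ℕ) = i then 1
      else if (a : ℕ) = i ∧ (c : ℕ) + 1 = i then 1
      else if (a : ℕ) = i ∧ (c : ℕ) = i then 0
      else if (a : ℕ) = (c : ℕ) then 1 else 0 := by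
  simp only [Zmat, Matrix.of_apply, Fin.ext_iff]

lemma Zinvmat_entry (b : R) (a c : Fin n) :
    Zinvmat n i b a c =
      if (a : ℕ) + 1 = i ∧ (c : ℕ) + 1 = i then 0
      else if (a : ℕ) + 1 = i ∧ (c : ℕ) = i then 1
      else if (a : ℕ) = i ∧ (c : ℕ) + 1 = i then 1
      else if (a : ℕ) = i ∧ (c : ℕ) = i then b
      else if (a : ℕ) = (c : ℕ) then 1 else 0 := by
  simp only [Zinvmat, Matrix.of_apply, Fin.ext_iff]

lemma Zmat_mul_apply (hp : (p : ℕ) + 1 = i) (hq : (q : ℕ) = i) (b : R)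
    (N : Matrix (Fin n) (Fin n) R) (a c : Fin n) :
    (Zmat n i b * N) a c =
      if (a : ℕ) + 1 = i then b * N p c + N q c
      else if (a : ℕ) = i then N p c
      else N a c := by
  have hpq : p ≠ q := by intro h; rw [h] at hp; omega
  rw [Matrix.mul_apply]
  split_ifs with h1 h2
  · rw [Fintype.sum_eq_add p q hpq ?_]
    · rw [Zmat_entry, Zmat_entry]
      split_ifs <;> first | ring1 | (exfalso; omega)
    · intro x ⟨hxp, hxq⟩
      have hxp' : (x : ℕ) ≠ (p : ℕ) := fun h => hxp (Fin.ext h)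
      have hxq' : (x : ℕ) ≠ (q : ℕ) := fun h => hxq (Fin.ext h)
      rw [Zmat_entry]
      split_ifs <;> first | exact zero_mul _ | (exfalso; omega)
  · rw [Fintype.sum_eq_single p ?_]
    · rw [Zmat_entry]
      split_ifs <;> first | ring1 | (exfalso; omega)
    · intro x hxp
      have hxp' : (x : ℕ) ≠ (p : ℕ) := fun h => hxp (Fin.ext h)
      rw [Zmat_entry]
      split_ifs <;> first | exact zero_mul _ | (exfalso; omega)
  · rw [Fintype.sum_eq_single a ?_]
    · rw [Zmat_entry]
      split_ifs <;> first | ring1 | (exfalso; omega)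
    · intro x hxa
      have hxa' : (x : ℕ) ≠ (a : ℕ) := fun h => hxa (Fin.ext h)
      rw [Zmat_entry]
      split_ifs <;> first | exact zero_mul _ | (exfalso; omega)

lemma mul_Zinvmat_apply (hp : (p : ℕ) + 1 = i) (hq : (q : ℕ) = i) (b : R)
    (N : Matrix (Fin n) (Fin n) R) (a c : Fin n) :
    (N * Zinvmat n i b) a c =
      if (c : ℕ) + 1 = i then N a q
      else if (c : ℕ) = i then N a p + N a q * b
      else N a c := by
  have hpq : p ≠ q := by intro h; rw [h] at hp; omega
  rw [Matrix.mul_apply]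
  split_ifs with h1 h2
  · rw [Fintype.sum_eq_single q ?_]
    · rw [Zinvmat_entry]
      split_ifs <;> first | ring1 | (exfalso; omega)
    · intro x hxq
      have hxq' : (x : ℕ) ≠ (q : ℕ) := fun h => hxq (Fin.ext h)
      rw [Zinvmat_entry]
      split_ifs <;> first | exact mul_zero _ | (exfalso; omega)
  · rw [Fintype.sum_eq_add p q hpq ?_]
    · rw [Zinvmat_entry, Zinvmat_entry]
      split_ifs <;> first | ring1 | (exfalso; omega)
    · intro x ⟨hxp, hxq⟩
      have hxp' : (x : ℕ) ≠ (p : ℕ) := fun h => hxp (Fin.ext h)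
      have hxq' : (x : ℕ) ≠ (q : ℕ) := fun h => hxq (Fin.ext h)
      rw [Zinvmat_entry]
      split_ifs <;> first | exact mul_zero _ | (exfalso; omega)
  · rw [Fintype.sum_eq_single c ?_]
    · rw [Zinvmat_entry]
      split_ifs <;> first | ring1 | (exfalso; omega)
    · intro x hxc
      have hxc' : (x : ℕ) ≠ (c : ℕ) := fun h => hxc (Fin.ext h)
      rw [Zinvmat_entry]
      split_ifs <;> first | exact mul_zero _ | (exfalso; omega)

lemma Zmat_mul_Zinvmat [CharP R 2] (hp : (p : ℕ) + 1 = i) (hq : (q : ℕ) = i) (b : R) :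
    Zmat n i b * Zinvmat n i b = 1 := by
  ext a c
  rw [Zmat_mul_apply hp hq, Matrix.one_apply, Zinvmat_entry, Zinvmat_entry, Zinvmat_entry]
  simp only [Fin.ext_iff]
  have h2 : (2 : R) = 0 := CharTwo.two_eq_zero
  split_ifs <;> first | ring1 | (exfalso; omega) | (ring_nf; rw [h2]; ring1)

end

/-- If `L` is strictly lower triangular and `b' = b + L_{i+1,i}` (1-based indices),
then `Z_i(b) (I + L) Z_i(b')⁻¹` is lower unitriangular. -/
theorem Zmat_conj_lower_unitriangular {R : Type*} [CommRing R] [CharP R 2] {n : ℕ}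
    (hn : 2 ≤ n) (i : ℕ) (hi1 : 1 ≤ i) (hi2 : i ≤ n - 1) (b : R)
    (L : Matrix (Fin n) (Fin n) R) (hL : ∀ a c : Fin n, a ≤ c → L a c = 0) :
    (∀ a c : Fin n, a < c →
        (Zmat n i b * (1 + L)
          * (Zmat n i (b + L ⟨i, by omega⟩ ⟨i - 1, by omega⟩))⁻¹) a c = 0) ∧
    (∀ a : Fin n,
        (Zmat n i b * (1 + L)
          * (Zmat n i (b + L ⟨i, by omega⟩ ⟨i - 1, by omega⟩))⁻¹) a a = 1) := by
  have hin : i < n := by omega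
  have hin' : i - 1 < n := by omega
  set p : Fin n := ⟨i - 1, hin'⟩ with hpdef
  set q : Fin n := ⟨i, hin⟩ with hqdef
  have hp : (p : ℕ) + 1 = i := by simp only [hpdef]; omega
  have hq : (q : ℕ) = i := rfl
  have hb' : L ⟨i, by omega⟩ ⟨i - 1, by omega⟩ = L q p := rfl
  rw [hb']
  set b' : R := b + L q p with hb'def
  have hinv : (Zmat n i b')⁻¹ = Zinvmat n i b' :=
    Matrix.inv_eq_right_inv (Zmat_mul_Zinvmat hp hq b')
  have key : ∀ a c : Fin n,
      (Zmat n i b * (1 + L) * (Zmat n i b')⁻¹) a c =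
        if (c : ℕ) + 1 = i then (Zmat n i b * (1 + L)) a q
        else if (c : ℕ) = i then (Zmat n i b * (1 + L)) a p + (Zmat n i b * (1 + L)) a q * b'
        else (Zmat n i b * (1 + L)) a c := by
    intro a c
    rw [hinv, mul_Zinvmat_apply hp hq]
  have rowlem := Zmat_mul_apply hp hq b (1 + L)
  have hA : ∀ x y : Fin n, (1 + L : Matrix (Fin n) (Fin n) R) x y =
      (if (x : ℕ) = (y : ℕ) then 1 else 0) + L x y := by
    intro x y
    simp only [Matrix.add_apply, Matrix.one_apply, Fin.ext_iff]
  have hLpp : L p p = 0 := hL p p le_rfl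
  have hLqq : L q q = 0 := hL q q le_rfl
  have hLpq : L p q = 0 := hL p q (by rw [Fin.le_def]; omega)
  constructor
  · intro a c hac
    have hac' : (a : ℕ) < (c : ℕ) := hac
    rw [key a c]
    split_ifs with hc1 hc2
    · -- c = p
      rw [rowlem]
      have h1 : ¬ ((a : ℕ) + 1 = i) := by omega
      have h2 : ¬ ((a : ℕ) = i) := by omega
      rw [if_neg h1, if_neg h2, hA, if_neg (by omega),
        hL a q (by rw [Fin.le_def]; omega), zero_add]
    · -- c = q
      rw [rowlem, rowlem]
      have h2 : ¬ ((a : ℕ) = i) := by omega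
      by_cases h1 : (a : ℕ) + 1 = i
      · -- a = p
        rw [if_pos h1, if_pos h1, hA, hA, hA, hA]
        rw [if_pos rfl, if_neg (by omega), if_neg (by omega), if_pos rfl,
          hLpp, hLpq, hLqq]
        rw [hb'def]
        have h2 : (2 : R) = 0 := CharTwo.two_eq_zero
        ring_nf
        rw [h2]
        ring1
      · rw [if_neg h1, if_neg h1, if_neg h2, if_neg h2, hA, hA]
        rw [if_neg (by omega), if_neg (by omega),
          hL a p (by rw [Fin.le_def]; omega),
          hL a q (by rw [Fin.le_def]; omega)]
        ring
    · -- c beyond the block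
      rw [rowlem]
      split_ifs with h1 h2
      · -- a = p, so c > q
        rw [hA, hA, if_neg (by omega), if_neg (by omega),
          hL p c (by rw [Fin.le_def]; simp [hpdef]; omega),
          hL q c (by rw [Fin.le_def]; omega)]
        ring
      · -- a = q, so c > q
        rw [hA, if_neg (by omega),
          hL p c (by rw [Fin.le_def]; simp [hpdef]; omega)]
        ring
      · rw [hA, if_neg (by omega), hL a c (le_of_lt hac)]
        ring
  · intro a
    rw [key a a]
    split_ifs with hc1 hc2
    · -- a = p
      rw [rowlem, if_pos hc1, hA, hA]
      rw [if_neg (by omega), if_pos (by omega), hLpq, hLqq]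
      ring
    · -- a = q
      rw [rowlem, rowlem, if_neg (by omega), if_pos hc2, if_neg (by omega), if_pos hc2]
      rw [hA, hA, if_pos (by omega), if_neg (by omega), hLpp, hLpq]
      ring
    · rw [rowlem, if_neg hc1, if_neg hc2, hA, if_pos rfl, hL a a le_rfl]
      ring
end

section
/- (Sylvester's determinant identity.) Let R be a commutative ring, M an n×n matrix over R, 1 ≤ k < n, and let i, j be indices with k < i, j ≤ n. Denote by M[S; T] the submatrix of M with row set S and column set T (in increasing order). Then det(M[{1,…,k,i}; {1,…,k,j}]) · det(M[{1,…,k−1}; {1,…,k−1}]) = det(M[{1,…,k−1,i}; {1,…,k−1,j}]) · det(M[{1,…,k}; {1,…,k}]) − det(M[{1,…,k−1,i}; {1,…,k}]) · det(M[{1,…,k}; {1,…,k−1,j}]). -/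
open Matrix

section DJ

variable {R : Type*} [CommRing R]

/-- The key identity, multiplied through by `A.det`. -/
lemma dj_mul (k : ℕ) (hk : 1 ≤ k) (A : Matrix (Fin (k + 1)) (Fin (k + 1)) R) :
    A.det *
      ((A.submatrix (⟨k - 1, by omega⟩ : Fin (k + 1)).succAbove
          (⟨k - 1, by omega⟩ : Fin (k + 1)).succAbove).det *
        (A.submatrix (⟨k, by omega⟩ : Fin (k + 1)).succAbove
          (⟨k, by omega⟩ : Fin (k + 1)).succAbove).det -
       (A.submatrix (⟨k - 1, by omega⟩ : Fin (k + 1)).succAbove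
          (⟨k, by omega⟩ : Fin (k + 1)).succAbove).det *
        (A.submatrix (⟨k, by omega⟩ : Fin (k + 1)).succAbove
          (⟨k - 1, by omega⟩ : Fin (k + 1)).succAbove).det)
    = A.det * (A.det *
        (A.submatrix (fun s : Fin (k - 1) => Fin.castLE (by omega) s)
          (fun s : Fin (k - 1) => Fin.castLE (by omega) s)).det) := by
  set p : Fin (k + 1) := ⟨k - 1, by omega⟩ with hp
  set q : Fin (k + 1) := ⟨k, by omega⟩ with hq
  have hek : k - 1 + 2 = k + 1 := by omega
  let e : Fin (k - 1) ⊕ Fin 2 ≃ Fin (k + 1) := finSumFinEquiv.trans (finCongr hek)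
  have he_inl : ∀ s : Fin (k - 1), ((e (Sum.inl s) : Fin (k + 1)) : ℕ) = (s : ℕ) := by
    intro s; simp [e]
  have he_inr : ∀ t : Fin 2, ((e (Sum.inr t) : Fin (k + 1)) : ℕ) = k - 1 + (t : ℕ) := by
    intro t; simp [e]
  set A' := A.submatrix e e with hA'
  set B := adjugate A' with hB
  set P : Matrix (Fin (k - 1)) (Fin 2) R := of fun s t => B (Sum.inl s) (Sum.inr t) with hP
  set Q : Matrix (Fin 2) (Fin 2) R := of fun s t => B (Sum.inr s) (Sum.inr t) with hQ
  set C : Matrix (Fin (k - 1) ⊕ Fin 2) (Fin (k - 1) ⊕ Fin 2) R := fromBlocks 1 P 0 Q with hC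
  have hAB : A' * B = A'.det • 1 := mul_adjugate A'
  have key : ∀ (x : Fin (k - 1) ⊕ Fin 2) (t : Fin 2),
      (∑ u : Fin (k - 1), A' x (Sum.inl u) * B (Sum.inl u) (Sum.inr t)) +
      (∑ u : Fin 2, A' x (Sum.inr u) * B (Sum.inr u) (Sum.inr t)) =
      (A'.det • (1 : Matrix (Fin (k - 1) ⊕ Fin 2) (Fin (k - 1) ⊕ Fin 2) R)) x (Sum.inr t) := by
    intro x t
    have := congrFun (congrFun hAB x) (Sum.inr t)
    rwa [mul_apply, Fintype.sum_sum_type] at this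
  have hmul : A' * C = fromBlocks A'.toBlocks₁₁ 0 A'.toBlocks₂₁
      (A'.det • (1 : Matrix (Fin 2) (Fin 2) R)) := by
    nth_rewrite 1 [← fromBlocks_toBlocks A']
    rw [hC, fromBlocks_multiply, Matrix.mul_one, Matrix.mul_zero, add_zero,
      Matrix.mul_zero, add_zero, Matrix.mul_one]
    have h12 : A'.toBlocks₁₁ * P + A'.toBlocks₁₂ * Q = 0 := by
      ext s t
      have := key (Sum.inl s) t
      simp only [Matrix.smul_apply, one_apply, smul_eq_mul] at this
      simpa [Matrix.mul_apply, toBlocks₁₁, toBlocks₁₂, hP, hQ] using this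
    have h22 : A'.toBlocks₂₁ * P + A'.toBlocks₂₂ * Q =
        A'.det • (1 : Matrix (Fin 2) (Fin 2) R) := by
      ext s t
      have := key (Sum.inr s) t
      simp only [Matrix.smul_apply, one_apply, smul_eq_mul] at this
      simp only [Matrix.add_apply, Matrix.mul_apply, toBlocks₂₁, toBlocks₂₂, hP, hQ, of_apply,
        Matrix.smul_apply, one_apply, smul_eq_mul]
      rw [this]
      by_cases h : s = t <;> simp [h, Sum.inr.injEq]
    rw [h12, h22]
  have hdet := congrArg Matrix.det hmul
  rw [det_mul, hC, det_fromBlocks_zero₂₁, det_one, one_mul, det_fromBlocks_zero₁₂,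
    det_smul, det_one, mul_one] at hdet
  -- identify pieces
  have hAdet : A'.det = A.det := det_submatrix_equiv_self e A
  have hadj : B = (adjugate A).submatrix e e := adjugate_submatrix_equiv_self e A
  have he0 : e (Sum.inr 0) = p := by
    apply Fin.ext; rw [he_inr]; simp [hp]
  have he1 : e (Sum.inr 1) = q := by
    apply Fin.ext; rw [he_inr]; simp [hq]; omega
  have hQ00 : Q 0 0 = adjugate A p p := by rw [hQ]; simp only [of_apply, hadj, submatrix_apply, he0]
  have hQ11 : Q 1 1 = adjugate A q q := by rw [hQ]; simp only [of_apply, hadj, submatrix_apply, he1]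
  have hQ01 : Q 0 1 = adjugate A p q := by
    rw [hQ]; simp only [of_apply, hadj, submatrix_apply, he0, he1]
  have hQ10 : Q 1 0 = adjugate A q p := by
    rw [hQ]; simp only [of_apply, hadj, submatrix_apply, he0, he1]
  have hqdet : Q.det = adjugate A p p * adjugate A q q - adjugate A p q * adjugate A q p := by
    rw [det_fin_two, hQ00, hQ11, hQ01, hQ10]
  have hpp : adjugate A p p = (A.submatrix p.succAbove p.succAbove).det := by
    rw [adjugate_fin_succ_eq_det_submatrix]
    have : ((p : ℕ) + (p : ℕ)) = 2 * (k - 1) := by simp [hp]; ring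
    rw [this]
    simp [pow_mul]
  have hqq : adjugate A q q = (A.submatrix q.succAbove q.succAbove).det := by
    rw [adjugate_fin_succ_eq_det_submatrix]
    have : ((q : ℕ) + (q : ℕ)) = 2 * k := by simp [hq]; ring
    rw [this]
    simp [pow_mul]
  have hpq : adjugate A p q = -(A.submatrix q.succAbove p.succAbove).det := by
    rw [adjugate_fin_succ_eq_det_submatrix]
    have hodd : Odd ((q : ℕ) + (p : ℕ)) := by
      simp only [hp, hq]; exact ⟨k - 1, by omega⟩
    rw [hodd.neg_one_pow]; ring
  have hqp : adjugate A q p = -(A.submatrix p.succAbove q.succAbove).det := by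
    rw [adjugate_fin_succ_eq_det_submatrix]
    have hodd : Odd ((p : ℕ) + (q : ℕ)) := by
      simp only [hp, hq]; exact ⟨k - 1, by omega⟩
    rw [hodd.neg_one_pow]; ring
  have hblk : A'.toBlocks₁₁ = A.submatrix
      (fun s : Fin (k - 1) => Fin.castLE (by omega) s)
      (fun s : Fin (k - 1) => Fin.castLE (by omega) s) := by
    ext s t
    simp only [toBlocks₁₁, of_apply, hA', submatrix_apply]
    congr 1 <;> apply Fin.ext <;> simp [he_inl]
  rw [hqdet, hpp, hqq, hpq, hqp, hAdet, hblk] at hdet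
  rw [Fintype.card_fin] at hdet
  linear_combination hdet

/-- Desnanot–Jacobi-type identity over an arbitrary commutative ring. -/
lemma dj (k : ℕ) (hk : 1 ≤ k) (A : Matrix (Fin (k + 1)) (Fin (k + 1)) R) :
    A.det * (A.submatrix (fun s : Fin (k - 1) => Fin.castLE (by omega) s)
        (fun s : Fin (k - 1) => Fin.castLE (by omega) s)).det
    = (A.submatrix (⟨k - 1, by omega⟩ : Fin (k + 1)).succAbove
          (⟨k - 1, by omega⟩ : Fin (k + 1)).succAbove).det *
        (A.submatrix (⟨k, by omega⟩ : Fin (k + 1)).succAbove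
          (⟨k, by omega⟩ : Fin (k + 1)).succAbove).det -
       (A.submatrix (⟨k - 1, by omega⟩ : Fin (k + 1)).succAbove
          (⟨k, by omega⟩ : Fin (k + 1)).succAbove).det *
        (A.submatrix (⟨k, by omega⟩ : Fin (k + 1)).succAbove
          (⟨k - 1, by omega⟩ : Fin (k + 1)).succAbove).det := by
  -- first prove it for the generic matrix over `MvPolynomial _ ℤ`, by cancellation
  let X := mvPolynomialX (Fin (k + 1)) (Fin (k + 1)) ℤ
  have hX : X.det ≠ 0 := det_mvPolynomialX_ne_zero _ _
  have hgen := mul_left_cancel₀ hX (dj_mul k hk X).symm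
  -- now specialize via the evaluation homomorphism
  let φ : MvPolynomial (Fin (k + 1) × Fin (k + 1)) ℤ →+* R :=
    MvPolynomial.eval₂Hom (Int.castRingHom R) fun pq => A pq.1 pq.2
  have hmap : X.map φ = A := by
    rw [show ⇑φ = MvPolynomial.eval₂ (Int.castRingHom R) fun pq : _ × _ => A pq.1 pq.2 from
      MvPolynomial.coe_eval₂Hom _ _]
    exact mvPolynomialX_map_eval₂ _ A
  have := congrArg φ hgen
  simpa only [_root_.map_mul, _root_.map_sub, RingHom.map_det, RingHom.mapMatrix_apply,
    ← submatrix_map, hmap] using this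
end DJ

/-- The `m`-th leading principal minor of a square matrix. -/
def lead {R : Type*} [CommRing R] {n : ℕ} (M : Matrix (Fin n) (Fin n) R)
    (m : ℕ) (hm : m ≤ n) : R :=
  (M.submatrix (Fin.castLE hm) (Fin.castLE hm)).det

/-- Sylvester's determinant identity.  Here indices `i`, `j` are 0-based
(`k ≤ i, j` corresponds to `k < i, j ≤ n` in 1-based notation), and
`M[{1,…,k,i}; {1,…,k,j}]` etc. are realized as submatrices. -/
theorem sylvester_identity {R : Type*} [CommRing R] {n : ℕ}
    (M : Matrix (Fin n) (Fin n) R) (k : ℕ) (hk1 : 1 ≤ k) (hkn : k < n)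
    (i j : Fin n) (hi : k ≤ (i : ℕ)) (hj : k ≤ (j : ℕ)) :
    (M.submatrix
        (fun s : Fin (k + 1) => if h : (s : ℕ) < k then (⟨s, h.trans hkn⟩ : Fin n) else i)
        (fun s : Fin (k + 1) => if h : (s : ℕ) < k then (⟨s, h.trans hkn⟩ : Fin n) else j)).det
      * lead M (k - 1) (by omega)
    = (M.submatrix
        (fun s : Fin k => if (s : ℕ) < k - 1 then (⟨s, s.isLt.trans hkn⟩ : Fin n) else i)
        (fun s : Fin k => if (s : ℕ) < k - 1 then (⟨s, s.isLt.trans hkn⟩ : Fin n) else j)).det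
      * lead M k hkn.le
    - (M.submatrix
        (fun s : Fin k => if (s : ℕ) < k - 1 then (⟨s, s.isLt.trans hkn⟩ : Fin n) else i)
        (fun s : Fin k => (⟨s, s.isLt.trans hkn⟩ : Fin n))).det
      * (M.submatrix
        (fun s : Fin k => (⟨s, s.isLt.trans hkn⟩ : Fin n))
        (fun s : Fin k => if (s : ℕ) < k - 1 then (⟨s, s.isLt.trans hkn⟩ : Fin n) else j)).det := by
  set r : Fin (k + 1) → Fin n :=
    fun s => if h : (s : ℕ) < k then (⟨s, h.trans hkn⟩ : Fin n) else i with hr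
  set c : Fin (k + 1) → Fin n :=
    fun s => if h : (s : ℕ) < k then (⟨s, h.trans hkn⟩ : Fin n) else j with hc
  have key := dj k hk1 (M.submatrix r c)
  simp only [Matrix.submatrix_submatrix] at key
  -- values of the succAbove maps
  have hvp : ∀ s : Fin k,
      (((⟨k - 1, by omega⟩ : Fin (k + 1)).succAbove s : Fin (k + 1)) : ℕ) =
        if (s : ℕ) < k - 1 then (s : ℕ) else (s : ℕ) + 1 := by
    intro s
    simp only [Fin.succAbove, Fin.lt_def, Fin.coe_castSucc]
    split_ifs <;> simp
  have hvq : ∀ s : Fin k,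
      (((⟨k, by omega⟩ : Fin (k + 1)).succAbove s : Fin (k + 1)) : ℕ) = (s : ℕ) := by
    intro s
    simp only [Fin.succAbove, Fin.lt_def, Fin.coe_castSucc]
    rw [if_pos s.isLt]; simp
  -- identify the composed index maps
  have hrlt : ∀ (x : Fin (k + 1)) (hx : (x : ℕ) < k), r x = (⟨x, hx.trans hkn⟩ : Fin n) :=
    fun x hx => dif_pos hx
  have hrge : ∀ (x : Fin (k + 1)), ¬ (x : ℕ) < k → r x = i := fun x hx => dif_neg hx
  have hclt : ∀ (x : Fin (k + 1)) (hx : (x : ℕ) < k), c x = (⟨x, hx.trans hkn⟩ : Fin n) :=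
    fun x hx => dif_pos hx
  have hcge : ∀ (x : Fin (k + 1)), ¬ (x : ℕ) < k → c x = j := fun x hx => dif_neg hx
  have hrp : (r ∘ (⟨k - 1, by omega⟩ : Fin (k + 1)).succAbove) =
      fun s : Fin k => if (s : ℕ) < k - 1 then (⟨s, s.isLt.trans hkn⟩ : Fin n) else i := by
    funext s
    simp only [Function.comp_apply]
    by_cases h : (s : ℕ) < k - 1
    · rw [if_pos h, hrlt _ (by rw [hvp s, if_pos h]; omega)]
      apply Fin.ext; simp [hvp s, h]
    · rw [if_neg h, hrge _ (by rw [hvp s, if_neg h]; omega)]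
  have hcp : (c ∘ (⟨k - 1, by omega⟩ : Fin (k + 1)).succAbove) =
      fun s : Fin k => if (s : ℕ) < k - 1 then (⟨s, s.isLt.trans hkn⟩ : Fin n) else j := by
    funext s
    simp only [Function.comp_apply]
    by_cases h : (s : ℕ) < k - 1
    · rw [if_pos h, hclt _ (by rw [hvp s, if_pos h]; omega)]
      apply Fin.ext; simp [hvp s, h]
    · rw [if_neg h, hcge _ (by rw [hvp s, if_neg h]; omega)]
  have hrq : (r ∘ (⟨k, by omega⟩ : Fin (k + 1)).succAbove) =
      fun s : Fin k => (⟨s, s.isLt.trans hkn⟩ : Fin n) := by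
    funext s
    simp only [Function.comp_apply]
    rw [hrlt _ (by rw [hvq s]; exact s.isLt)]
    apply Fin.ext; simp [hvq s]
  have hcq : (c ∘ (⟨k, by omega⟩ : Fin (k + 1)).succAbove) =
      fun s : Fin k => (⟨s, s.isLt.trans hkn⟩ : Fin n) := by
    funext s
    simp only [Function.comp_apply]
    rw [hclt _ (by rw [hvq s]; exact s.isLt)]
    apply Fin.ext; simp [hvq s]
  have hrc : (r ∘ fun s : Fin (k - 1) => Fin.castLE (by omega) s) =
      Fin.castLE (show k - 1 ≤ n by omega) := by
    funext s
    simp only [Function.comp_apply]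
    rw [hrlt _ (by simp; omega)]
    apply Fin.ext; simp
  have hcc : (c ∘ fun s : Fin (k - 1) => Fin.castLE (by omega) s) =
      Fin.castLE (show k - 1 ≤ n by omega) := by
    funext s
    simp only [Function.comp_apply]
    rw [hclt _ (by simp; omega)]
    apply Fin.ext; simp
  have hlk : (fun s : Fin k => (⟨(s : ℕ), s.isLt.trans hkn⟩ : Fin n)) = Fin.castLE hkn.le := by
    funext s; apply Fin.ext; simp
  rw [hrp, hcp, hrq, hcq, hrc, hcc] at key
  rw [lead, lead, ← hlk]
  exact key
end

section
/- Let F be a field, M an n×n matrix over F, and k ≥ 0 such that the leading principal minors Δ_1(M), …, Δ_k(M) are all nonzero. Define matrices M^{(1)} = M and, recursively for 1 ≤ s ≤ k, M^{(s+1)}_{ij} = M^{(s)}_{ij} − M^{(s)}_{is}·(M^{(s)}_{ss})⁻¹·M^{(s)}_{sj} for s < i, j ≤ n. Then for all k < i, j ≤ n, M^{(k+1)}_{ij} = det(M[{1,…,k,i}; {1,…,k,j}]) / det(M[{1,…,k}; {1,…,k}]). -/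
/-- `schur M s` is the matrix `M^{(s+1)}` of the Gelfand–Retakh recursion:
`M^{(1)} = M` and `M^{(s+1)}_{ij} = M^{(s)}_{ij} − M^{(s)}_{is}(M^{(s)}_{ss})⁻¹M^{(s)}_{sj}`
(the pivot of the step from `M^{(s)}` to `M^{(s+1)}` is the 1-based index `s`,
i.e. the 0-based index `s - 1`). -/
def schur {F : Type*} [Field F] {n : ℕ} (M : Matrix (Fin n) (Fin n) F) :
    ℕ → Matrix (Fin n) (Fin n) F
  | 0 => M
  | (s + 1) =>
    if h : s < n then
      Matrix.of fun a b =>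
        schur M s a b - schur M s a ⟨s, h⟩ * (schur M s ⟨s, h⟩ ⟨s, h⟩)⁻¹ * schur M s ⟨s, h⟩ b
    else schur M s

/-- The entries of the Schur complement with respect to the leading `k × k` block. -/
noncomputable def sc {F : Type*} [Field F] {n : ℕ} (M : Matrix (Fin n) (Fin n) F)
    {k : ℕ} (hk : k ≤ n) (a b : Fin n) : F :=
  M a b - ∑ s : Fin k, ∑ t : Fin k,
    M a (Fin.castLE hk s) * (M.submatrix (Fin.castLE hk) (Fin.castLE hk))⁻¹ s t
      * M (Fin.castLE hk t) b

/-- Bordered-minor formula: the determinant of a leading block bordered by extra rows and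
columns equals the leading minor times the determinant of the matrix of Schur complement
entries. -/
lemma border {F : Type*} [Field F] {n k r : ℕ} (M : Matrix (Fin n) (Fin n) F)
    (hk : k ≤ n) (hΔ : lead M k hk ≠ 0) (rows cols : Fin r → Fin n)
    (f g : Fin (k + r) → Fin n)
    (hf1 : ∀ (s : Fin (k + r)) (h : (s : ℕ) < k), f s = Fin.castLE hk ⟨s, h⟩)
    (hg1 : ∀ (s : Fin (k + r)) (h : (s : ℕ) < k), g s = Fin.castLE hk ⟨s, h⟩)
    (hf2 : ∀ a : Fin r, f (finSumFinEquiv (Sum.inr a)) = rows a)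
    (hg2 : ∀ a : Fin r, g (finSumFinEquiv (Sum.inr a)) = cols a) :
    (M.submatrix f g).det =
      lead M k hk * (Matrix.of fun a b : Fin r => sc M hk (rows a) (cols b)).det := by
  classical
  have hdet : IsUnit (M.submatrix (Fin.castLE hk) (Fin.castLE hk)).det :=
    isUnit_iff_ne_zero.2 hΔ
  haveI : Invertible (M.submatrix (Fin.castLE hk) (Fin.castLE hk)) :=
    (M.submatrix (Fin.castLE hk) (Fin.castLE hk)).invertibleOfIsUnitDet hdet
  have key : (M.submatrix f g).submatrix finSumFinEquiv finSumFinEquiv =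
      Matrix.fromBlocks (M.submatrix (Fin.castLE hk) (Fin.castLE hk))
        (Matrix.of fun s (b : Fin r) => M (Fin.castLE hk s) (cols b))
        (Matrix.of fun (a : Fin r) s => M (rows a) (Fin.castLE hk s))
        (Matrix.of fun (a b : Fin r) => M (rows a) (cols b)) := by
    ext x y
    cases x with
    | inl s =>
      cases y with
      | inl t =>
        have hs : ((finSumFinEquiv (Sum.inl s) : Fin (k + r)) : ℕ) < k := by
          simp [finSumFinEquiv]
        have ht : ((finSumFinEquiv (Sum.inl t) : Fin (k + r)) : ℕ) < k := by
          simp [finSumFinEquiv]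
        simp only [Matrix.submatrix_apply, hf1 _ hs, hg1 _ ht]
        simp [Fin.ext_iff, finSumFinEquiv]
      | inr b =>
        have hs : ((finSumFinEquiv (Sum.inl s) : Fin (k + r)) : ℕ) < k := by
          simp [finSumFinEquiv]
        simp only [Matrix.submatrix_apply, hf1 _ hs, hg2 b]
        simp [Fin.ext_iff, finSumFinEquiv]
    | inr a =>
      cases y with
      | inl t =>
        have ht : ((finSumFinEquiv (Sum.inl t) : Fin (k + r)) : ℕ) < k := by
          simp [finSumFinEquiv]
        simp only [Matrix.submatrix_apply, hf2 a, hg1 _ ht]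
        simp [Fin.ext_iff, finSumFinEquiv]
      | inr b =>
        simp only [Matrix.submatrix_apply, hf2 a, hg2 b]
        simp
  have hdets := Matrix.det_submatrix_equiv_self finSumFinEquiv (M.submatrix f g)
  have hmat : (Matrix.of fun (a b : Fin r) => M (rows a) (cols b)) -
      (Matrix.of fun (a : Fin r) s => M (rows a) (Fin.castLE hk s)) *
        ⅟(M.submatrix (Fin.castLE hk) (Fin.castLE hk)) *
        (Matrix.of fun s (b : Fin r) => M (Fin.castLE hk s) (cols b)) =
      Matrix.of fun (a b : Fin r) => sc M hk (rows a) (cols b) := by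
    ext a b
    simp only [Matrix.sub_apply, Matrix.of_apply, sc]
    have hinv : ⅟(M.submatrix (Fin.castLE hk) (Fin.castLE hk)) =
        (M.submatrix (Fin.castLE hk) (Fin.castLE hk))⁻¹ :=
      Matrix.invOf_eq_nonsing_inv _
    rw [hinv]
    congr 1
    simp only [Matrix.mul_apply, Matrix.of_apply, Finset.sum_mul]
    rw [Finset.sum_comm]
  rw [← hdets, key, Matrix.det_fromBlocks₁₁, hmat]
  rfl

lemma lead_ne {F : Type*} [Field F] {n : ℕ} (M : Matrix (Fin n) (Fin n) F)
    (k : ℕ) (hkn : k ≤ n)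
    (hmin : ∀ (m : ℕ) (hm : m < k), lead M (m + 1) (Nat.succ_le_of_lt (hm.trans_le hkn)) ≠ 0) :
    lead M k hkn ≠ 0 := by
  cases k with
  | zero => simp [lead, Matrix.det_fin_zero]
  | succ m => exact hmin m (Nat.lt_succ_self m)

theorem schur_eq_ratio_of_minors {F : Type*} [Field F] {n : ℕ}
    (M : Matrix (Fin n) (Fin n) F) (k : ℕ) (hkn : k ≤ n)
    (hmin : ∀ (m : ℕ) (hm : m < k), lead M (m + 1) (by omega) ≠ 0) :
    ∀ (i j : Fin n), k ≤ (i : ℕ) → k ≤ (j : ℕ) →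
      schur M k i j =
        (M.submatrix
            (fun s : Fin (k + 1) =>
              if h : (s : ℕ) < k then (⟨s, h.trans_le hkn⟩ : Fin n) else i)
            (fun s : Fin (k + 1) =>
              if h : (s : ℕ) < k then (⟨s, h.trans_le hkn⟩ : Fin n) else j)).det
          / lead M k hkn := by
  induction k with
  | zero =>
    intro i j _ _
    have h1 : lead M 0 hkn = 1 := by simp [lead, Matrix.det_fin_zero]
    rw [h1, div_one]
    show M i j = _
    rw [Matrix.det_fin_one]
    simp
  | succ k ih =>
    intro i j hi hj
    have hk : k ≤ n := Nat.le_of_succ_le hkn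
    have hknk : k < n := hkn
    set p : Fin n := ⟨k, hknk⟩ with hp
    have hΔ : lead M k hk ≠ 0 :=
      lead_ne M k hk (fun m hm => hmin m (Nat.lt_succ_of_lt hm))
    have hΔ' : lead M (k + 1) hkn ≠ 0 := hmin k (Nat.lt_succ_self k)
    -- IH-derived values of schur M k in terms of sc
    have hsc : ∀ (a b : Fin n), k ≤ (a : ℕ) → k ≤ (b : ℕ) →
        schur M k a b = sc M hk a b := by
      intro a b ha hb
      rw [ih hk (fun m hm => hmin m (Nat.lt_succ_of_lt hm)) a b ha hb]
      have hb1 : (M.submatrix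
          (fun s : Fin (k + 1) =>
            if h : (s : ℕ) < k then (⟨s, h.trans_le hk⟩ : Fin n) else a)
          (fun s : Fin (k + 1) =>
            if h : (s : ℕ) < k then (⟨s, h.trans_le hk⟩ : Fin n) else b)).det
          = lead M k hk * sc M hk a b := by
        have := border M hk hΔ (fun _ : Fin 1 => a) (fun _ : Fin 1 => b)
          (fun s : Fin (k + 1) =>
            if h : (s : ℕ) < k then (⟨s, h.trans_le hk⟩ : Fin n) else a)
          (fun s : Fin (k + 1) =>
            if h : (s : ℕ) < k then (⟨s, h.trans_le hk⟩ : Fin n) else b)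
          (fun s h => by simp [dif_pos h, Fin.ext_iff])
          (fun s h => by simp [dif_pos h, Fin.ext_iff])
          (fun c => by simp [finSumFinEquiv])
          (fun c => by simp [finSumFinEquiv])
        rw [this, Matrix.det_fin_one]
        simp
      rw [hb1]
      exact mul_div_cancel_left₀ _ hΔ
    have hSij := hsc i j (Nat.le_of_succ_le hi) (Nat.le_of_succ_le hj)
    have hSip := hsc i p (Nat.le_of_succ_le hi) (le_refl k)
    have hSpj := hsc p j (le_refl k) (Nat.le_of_succ_le hj)
    have hSpp := hsc p p (le_refl k) (le_refl k)
    -- lead M (k+1) = lead M k * sc M hk p p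
    have hlead : lead M (k + 1) hkn = lead M k hk * sc M hk p p := by
      have := border M hk hΔ (fun _ : Fin 1 => p) (fun _ : Fin 1 => p)
        (Fin.castLE hkn) (Fin.castLE hkn)
        (fun s h => by simp [Fin.ext_iff])
        (fun s h => by simp [Fin.ext_iff])
        (fun c => by simp [finSumFinEquiv, Fin.ext_iff, p])
        (fun c => by simp [finSumFinEquiv, Fin.ext_iff, p])
      rw [lead]
      rw [this, Matrix.det_fin_one]
      simp
    have hpp : sc M hk p p ≠ 0 := by
      intro h0
      rw [hlead, h0, mul_zero] at hΔ'
      exact hΔ' rfl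
    -- the big bordered minor
    have hbig : (M.submatrix
          (fun s : Fin (k + 1 + 1) =>
            if h : (s : ℕ) < k + 1 then (⟨s, h.trans_le hkn⟩ : Fin n) else i)
          (fun s : Fin (k + 1 + 1) =>
            if h : (s : ℕ) < k + 1 then (⟨s, h.trans_le hkn⟩ : Fin n) else j)).det
        = lead M k hk * (sc M hk p p * sc M hk i j - sc M hk p j * sc M hk i p) := by
      have := border M hk hΔ (![p, i]) (![p, j])
        (fun s : Fin (k + 1 + 1) =>
          if h : (s : ℕ) < k + 1 then (⟨s, h.trans_le hkn⟩ : Fin n) else i)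
        (fun s : Fin (k + 1 + 1) =>
          if h : (s : ℕ) < k + 1 then (⟨s, h.trans_le hkn⟩ : Fin n) else j)
        (fun s h => by simp [Nat.lt_succ_of_lt h, Fin.ext_iff])
        (fun s h => by simp [Nat.lt_succ_of_lt h, Fin.ext_iff])
        (fun c => by
          fin_cases c <;>
            simp [finSumFinEquiv, Fin.ext_iff, p])
        (fun c => by
          fin_cases c <;>
            simp [finSumFinEquiv, Fin.ext_iff, p])
      rw [this, Matrix.det_fin_two]
      simp
    rw [hbig, hlead]
    -- unfold one step of the recursion
    have hstep : schur M (k + 1) i j =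
        schur M k i j - schur M k i p * (schur M k p p)⁻¹ * schur M k p j := by
      have hu : schur M (k + 1) = if h : k < n then
          Matrix.of fun a b =>
            schur M k a b - schur M k a ⟨k, h⟩ * (schur M k ⟨k, h⟩ ⟨k, h⟩)⁻¹ * schur M k ⟨k, h⟩ b
        else schur M k := rfl
      rw [hu, dif_pos hknk]
      rfl
    rw [hstep, hSij, hSip, hSpj, hSpp]
    field_simp
end

section
/- Let ε be a skew-symmetric n×n matrix with rational entries and let k be a fixed index. Define the mutated matrix μ_k(ε) by (μ_k ε)_{ij} = −ε_{ij} if i = k or j = k, and (μ_k ε)_{ij} = ε_{ij} + [ε_{ik}]_+[ε_{kj}]_+ − [−ε_{ik}]_+[−ε_{kj}]_+ otherwise, where [x]_+ = max(x, 0). Define J ∈ Mat_n(ℚ) by J_{kk} = −1, J_{ik} = [ε_{ik}]_+ for i ≠ k, J_{ii} = 1 for i ≠ k, and J_{ij} = 0 otherwise. Then μ_k(ε) = J·ε·Jᵀ; in particular J is invertible and rank(μ_k ε) = rank(ε), and μ_k(ε) is again skew-symmetric. -/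
open Matrix

/-- Fomin–Zelevinsky matrix mutation of a skew-symmetric exchange matrix in direction `k`,
where `[x]_+ = max x 0`. -/
def mutMat {n : ℕ} (ε : Matrix (Fin n) (Fin n) ℚ) (k : Fin n) : Matrix (Fin n) (Fin n) ℚ :=
  Matrix.of fun a c =>
    if a = k ∨ c = k then -ε a c
    else ε a c + max (ε a k) 0 * max (ε k c) 0 - max (-ε a k) 0 * max (-ε k c) 0

/-- The matrix `J` with `J_{kk} = −1`, `J_{ik} = [ε_{ik}]_+` for `i ≠ k`,
`J_{ii} = 1` for `i ≠ k`, and all other entries `0`. -/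
def Jmat {n : ℕ} (ε : Matrix (Fin n) (Fin n) ℚ) (k : Fin n) : Matrix (Fin n) (Fin n) ℚ :=
  Matrix.of fun a c =>
    if a = k ∧ c = k then -1
    else if c = k then max (ε a k) 0
    else if a = c then 1 else 0

lemma Jmat_apply {n : ℕ} (ε : Matrix (Fin n) (Fin n) ℚ) (k a c : Fin n) :
    Jmat ε k a c = if a = k ∧ c = k then -1
      else if c = k then max (ε a k) 0
      else if a = c then 1 else 0 := rfl

lemma sumJ_row_k {n : ℕ} (ε : Matrix (Fin n) (Fin n) ℚ) (k : Fin n) (X : Fin n → ℚ) :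
    ∑ b, Jmat ε k k b * X b = -X k := by
  rw [Finset.sum_eq_single k]
  · simp [Jmat_apply]
  · intro b _ hb
    simp [Jmat_apply, hb, Ne.symm hb]
  · simp

lemma sumJ_row {n : ℕ} (ε : Matrix (Fin n) (Fin n) ℚ) (k a : Fin n) (ha : a ≠ k)
    (X : Fin n → ℚ) :
    ∑ b, Jmat ε k a b * X b = X a + max (ε a k) 0 * X k := by
  have hz : ∀ b ∈ Finset.univ, b ∉ ({a, k} : Finset (Fin n)) → Jmat ε k a b * X b = 0 := by
    intro b _ hb
    simp only [Finset.mem_insert, Finset.mem_singleton, not_or] at hb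
    simp [Jmat_apply, ha, hb.2, Ne.symm hb.1]
  rw [← Finset.sum_subset (Finset.subset_univ ({a, k} : Finset (Fin n))) hz,
    Finset.sum_pair ha]
  simp [Jmat_apply, ha]

lemma sumJ_col_k {n : ℕ} (ε : Matrix (Fin n) (Fin n) ℚ) (k : Fin n) (X : Fin n → ℚ) :
    ∑ d, X d * Jmat ε k k d = -X k := by
  rw [Finset.sum_eq_single k]
  · simp [Jmat_apply]
  · intro d _ hd
    simp [Jmat_apply, hd, Ne.symm hd]
  · simp

lemma sumJ_col {n : ℕ} (ε : Matrix (Fin n) (Fin n) ℚ) (k c : Fin n) (hc : c ≠ k)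
    (X : Fin n → ℚ) :
    ∑ d, X d * Jmat ε k c d = X c + X k * max (ε c k) 0 := by
  have hz : ∀ d ∈ Finset.univ, d ∉ ({c, k} : Finset (Fin n)) → X d * Jmat ε k c d = 0 := by
    intro d _ hd
    simp only [Finset.mem_insert, Finset.mem_singleton, not_or] at hd
    simp [Jmat_apply, hc, hd.2, Ne.symm hd.1]
  rw [← Finset.sum_subset (Finset.subset_univ ({c, k} : Finset (Fin n))) hz,
    Finset.sum_pair hc]
  simp [Jmat_apply, hc]

lemma key_max (x y : ℚ) :
    max x 0 * y + x * max (-y) 0 = max x 0 * max y 0 - max (-x) 0 * max (-y) 0 := by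
  have h1 : max x 0 - max (-x) 0 = x := max_zero_sub_max_neg_zero_eq_self x
  have h2 : max y 0 - max (-y) 0 = y := max_zero_sub_max_neg_zero_eq_self y
  linear_combination (-(max x 0)) * h2 + (-(max (-y) 0)) * h1

theorem mutation_conjugation {n : ℕ} (ε : Matrix (Fin n) (Fin n) ℚ)
    (hskew : εᵀ = -ε) (k : Fin n) :
    mutMat ε k = Jmat ε k * ε * (Jmat ε k)ᵀ ∧
    IsUnit (Jmat ε k) ∧
    (mutMat ε k).rank = ε.rank ∧
    (mutMat ε k)ᵀ = -(mutMat ε k) := by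
  have hsk : ∀ i j, ε j i = -ε i j := by
    intro i j
    have := congrFun (congrFun hskew i) j
    simpa [Matrix.transpose_apply] using this
  have hkk : ε k k = 0 := by
    have := hsk k k; linarith
  -- main conjugation identity
  have hmain : mutMat ε k = Jmat ε k * ε * (Jmat ε k)ᵀ := by
    ext a c
    rw [Matrix.mul_apply]
    have inner : ∀ d, (Jmat ε k * ε) a d = ∑ b, Jmat ε k a b * ε b d := by
      intro d; rw [Matrix.mul_apply]
    simp only [inner, Matrix.transpose_apply]
    by_cases ha : a = k
    · rw [ha]
      simp only [sumJ_row_k]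
      by_cases hc : c = k
      · rw [hc, sumJ_col_k]
        simp [mutMat, hkk]
      · rw [sumJ_col ε k c hc]
        simp [mutMat, hkk, hc]
    · simp only [sumJ_row ε k a ha]
      by_cases hc : c = k
      · rw [hc, sumJ_col_k]
        simp [mutMat, hkk, ha]
      · rw [sumJ_col ε k c hc]
        have h1 : ε c k = -ε k c := hsk k c
        have h2 := key_max (ε a k) (ε k c)
        simp only [mutMat, Matrix.of_apply, ha, hc, or_self, if_false, hkk, mul_zero,
          add_zero, h1]
        linarith [h2]
  -- J is an involution
  have hJ2 : Jmat ε k * Jmat ε k = 1 := by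
    ext a c
    rw [Matrix.mul_apply]
    by_cases ha : a = k
    · rw [ha, sumJ_row_k]
      by_cases hc : c = k
      · rw [hc]; simp [Jmat_apply, Matrix.one_apply]
      · simp [Jmat_apply, hc, Ne.symm hc, Matrix.one_apply]
    · rw [sumJ_row ε k a ha]
      by_cases hc : c = k
      · rw [hc]
        simp [Jmat_apply, ha, Matrix.one_apply, Ne.symm ha]
      · by_cases hac : a = c
        · rw [hac]; simp [Jmat_apply, hc, Ne.symm hc, Matrix.one_apply]
        · simp [Jmat_apply, ha, hc, hac, Matrix.one_apply, Ne.symm hc]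
  have hunit : IsUnit (Jmat ε k) := ⟨⟨Jmat ε k, Jmat ε k, hJ2, hJ2⟩, rfl⟩
  have hdet : IsUnit (Jmat ε k).det := (Matrix.isUnit_iff_isUnit_det _).mp hunit
  have hdetT : IsUnit (Jmat ε k)ᵀ.det := by rwa [Matrix.det_transpose]
  refine ⟨hmain, hunit, ?_, ?_⟩
  · rw [hmain, Matrix.rank_mul_eq_left_of_isUnit_det _ _ hdetT,
      Matrix.rank_mul_eq_right_of_isUnit_det _ _ hdet]
  · rw [hmain]
    rw [Matrix.transpose_mul, Matrix.transpose_mul, Matrix.transpose_transpose, hskew]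
    simp [Matrix.mul_assoc, Matrix.neg_mul, Matrix.mul_neg]
end
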